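/- The kernel of the ℂ-algebra homomorphism ℂ[y₀,y₁,y₂,y₃,y₄] → ℂ[x₀,x₁,x₂,x₃] sending y_i ↦ p_i (i = 0,…,4) is the principal ideal generated by the Igusa quartic polynomial G_I := y₄⁴ + (y₀² − y₁² − y₂² − y₃²)y₄² + y₁²y₂² + y₁²y₃² + y₂²y₃² − 2y₀y₁y₂y₃. In particular G_I(p₀,p₁,p₂,p₃,p₄) = 0. -/

import Mathlib

set_option maxHeartbeats 1000000


open MvPolynomial

/- The kernel of the `ℂ`-algebra homomorphism `ℂ[y₀,…,y₄] → ℂ[x₀,…,x₃]`, `yᵢ ↦ pᵢ`,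
is the principal ideal generated by the Igusa quartic `G_I`; in particular
`G_I(p₀,…,p₄) = 0`. -/

/-- `p₀ := x₀⁴+x₁⁴+x₂⁴+x₃⁴`. -/
noncomputable def p0 : MvPolynomial (Fin 4) ℂ := X 0 ^ 4 + X 1 ^ 4 + X 2 ^ 4 + X 3 ^ 4

/-- `p₁ := 2(x₀²x₁²+x₂²x₃²)`. -/
noncomputable def p1 : MvPolynomial (Fin 4) ℂ := 2 * (X 0 ^ 2 * X 1 ^ 2 + X 2 ^ 2 * X 3 ^ 2)

/-- `p₂ := 2(x₀²x₂²+x₁²x₃²)`. -/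
noncomputable def p2 : MvPolynomial (Fin 4) ℂ := 2 * (X 0 ^ 2 * X 2 ^ 2 + X 1 ^ 2 * X 3 ^ 2)

/-- `p₃ := 2(x₀²x₃²+x₁²x₂²)`. -/
noncomputable def p3 : MvPolynomial (Fin 4) ℂ := 2 * (X 0 ^ 2 * X 3 ^ 2 + X 1 ^ 2 * X 2 ^ 2)

/-- `p₄ := 4x₀x₁x₂x₃`. -/
noncomputable def p4 : MvPolynomial (Fin 4) ℂ := 4 * (X 0 * X 1 * X 2 * X 3)

/-- The `ℂ`-algebra homomorphism `ℂ[y₀,…,y₄] → ℂ[x₀,…,x₃]` sending `yᵢ ↦ pᵢ`. -/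
noncomputable def φ : MvPolynomial (Fin 5) ℂ →ₐ[ℂ] MvPolynomial (Fin 4) ℂ :=
  aeval ![p0, p1, p2, p3, p4]

/-- The Igusa quartic polynomial
`G_I := y₄⁴ + (y₀² − y₁² − y₂² − y₃²)y₄² + y₁²y₂² + y₁²y₃² + y₂²y₃² − 2y₀y₁y₂y₃`. -/
noncomputable def GI : MvPolynomial (Fin 5) ℂ :=
  X 4 ^ 4 + (X 0 ^ 2 - X 1 ^ 2 - X 2 ^ 2 - X 3 ^ 2) * X 4 ^ 2 +
    X 1 ^ 2 * X 2 ^ 2 + X 1 ^ 2 * X 3 ^ 2 + X 2 ^ 2 * X 3 ^ 2 - 2 * (X 0 * X 1 * X 2 * X 3)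

noncomputable def ψ : MvPolynomial (Fin 4) ℂ →ₐ[ℂ] MvPolynomial (Fin 4) ℂ :=
  aeval ![p1, p2, p3, p0]

lemma psurj (z : Fin 4 → ℂ) :
    ∃ x : Fin 4 → ℂ, ∀ i, eval x ((![p1, p2, p3, p0] : Fin 4 → _) i) = z i := by
  obtain ⟨a, ha⟩ := IsAlgClosed.exists_pow_nat_eq (k := ℂ) (z 3 + z 0 + z 1 + z 2) (n := 2) (by norm_num)
  obtain ⟨b, hb⟩ := IsAlgClosed.exists_pow_nat_eq (k := ℂ) (z 3 + z 0 - z 1 - z 2) (n := 2) (by norm_num)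
  obtain ⟨c, hc⟩ := IsAlgClosed.exists_pow_nat_eq (k := ℂ) (z 3 - z 0 + z 1 - z 2) (n := 2) (by norm_num)
  obtain ⟨d, hd⟩ := IsAlgClosed.exists_pow_nat_eq (k := ℂ) (z 3 - z 0 - z 1 + z 2) (n := 2) (by norm_num)
  obtain ⟨t0, ht0⟩ := IsAlgClosed.exists_pow_nat_eq (k := ℂ) ((a+b+c+d)/4) (n := 2) (by norm_num)
  obtain ⟨t1, ht1⟩ := IsAlgClosed.exists_pow_nat_eq (k := ℂ) ((a+b-c-d)/4) (n := 2) (by norm_num)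
  obtain ⟨t2, ht2⟩ := IsAlgClosed.exists_pow_nat_eq (k := ℂ) ((a-b+c-d)/4) (n := 2) (by norm_num)
  obtain ⟨t3, ht3⟩ := IsAlgClosed.exists_pow_nat_eq (k := ℂ) ((a-b-c+d)/4) (n := 2) (by norm_num)
  refine ⟨![t0, t1, t2, t3], ?_⟩
  intro i
  have hsimp : ∀ p : MvPolynomial (Fin 4) ℂ, eval ![t0,t1,t2,t3] p = eval ![t0,t1,t2,t3] p := fun _ => rfl
  fin_cases i
  · show eval ![t0,t1,t2,t3] p1 = z 0
    simp only [p1, map_add, map_mul, map_pow, map_ofNat, eval_X, Matrix.cons_val_zero,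
      Matrix.cons_val_one, Matrix.head_cons, Matrix.cons_val_two, Matrix.tail_cons,
      Matrix.cons_val_three]
    linear_combination (2*t1^2) * ht0 + (2*((a+b+c+d)/4)) * ht1 + (2*t3^2) * ht2 +
      (2*((a-b+c-d)/4)) * ht3 + (ha + hb - hc - hd)/4
  · show eval ![t0,t1,t2,t3] p2 = z 1
    simp only [p2, map_add, map_mul, map_pow, map_ofNat, eval_X, Matrix.cons_val_zero,
      Matrix.cons_val_one, Matrix.head_cons, Matrix.cons_val_two, Matrix.tail_cons,
      Matrix.cons_val_three]
    linear_combination (2*t2^2) * ht0 + (2*t3^2) * ht1 + (2*((a+b+c+d)/4)) * ht2 +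
      (2*((a+b-c-d)/4)) * ht3 + (ha - hb + hc - hd)/4
  · show eval ![t0,t1,t2,t3] p3 = z 2
    simp only [p3, map_add, map_mul, map_pow, map_ofNat, eval_X, Matrix.cons_val_zero,
      Matrix.cons_val_one, Matrix.head_cons, Matrix.cons_val_two, Matrix.tail_cons,
      Matrix.cons_val_three]
    linear_combination (2*t3^2) * ht0 + (2*t2^2) * ht1 + (2*((a+b-c-d)/4)) * ht2 +
      (2*((a+b+c+d)/4)) * ht3 + (ha - hb - hc + hd)/4
  · show eval ![t0,t1,t2,t3] p0 = z 3
    simp only [p0, map_add, map_mul, map_pow, map_ofNat, eval_X, Matrix.cons_val_zero,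
      Matrix.cons_val_one, Matrix.head_cons, Matrix.cons_val_two, Matrix.tail_cons,
      Matrix.cons_val_three]
    linear_combination (t0^2+(a+b+c+d)/4) * ht0 + (t1^2+(a+b-c-d)/4) * ht1 +
      (t2^2+(a-b+c-d)/4) * ht2 + (t3^2+(a-b-c+d)/4) * ht3 + (ha + hb + hc + hd)/4

lemma psi_inj : Function.Injective ψ := by
  rw [injective_iff_map_eq_zero]
  intro s hs
  apply MvPolynomial.funext (R := ℂ)
  intro z
  obtain ⟨x, hx⟩ := psurj z
  have hhom : (eval z) = ((eval x).comp ψ.toRingHom : MvPolynomial (Fin 4) ℂ →+* ℂ) := by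
    apply MvPolynomial.ringHom_ext
    · intro r
      simp [ψ, aeval_C]
    · intro i
      simp only [RingHom.coe_comp, Function.comp_apply, AlgHom.toRingHom_eq_coe,
        RingHom.coe_coe, eval_X, ψ, aeval_X]
      exact (hx i).symm
  rw [hhom]
  simp [hs]

noncomputable abbrev KK : Type := AlgebraicClosure (FractionRing (MvPolynomial (Fin 4) ℂ))

noncomputable def ι : MvPolynomial (Fin 4) ℂ →+* KK :=
  (algebraMap (FractionRing (MvPolynomial (Fin 4) ℂ)) KK).comp
    (algebraMap (MvPolynomial (Fin 4) ℂ) (FractionRing (MvPolynomial (Fin 4) ℂ)))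

lemma iota_inj : Function.Injective ι :=
  (algebraMap (FractionRing (MvPolynomial (Fin 4) ℂ)) KK).injective.comp
    (IsFractionRing.injective _ _)

/-- The alternate quartic `V = U₀U₁U₂U₃`. -/
noncomputable def V : MvPolynomial (Fin 4) ℂ :=
  (X 0^2 - X 1^2 - X 2^2 - X 3^2) * (-X 0^2 + X 1^2 - X 2^2 - X 3^2) *
  (-X 0^2 - X 1^2 + X 2^2 - X 3^2) * (-X 0^2 - X 1^2 - X 2^2 + X 3^2)

lemma p4sq_ne_V : p4 ^ 2 ≠ V := by
  intro h
  have := congrArg (eval ![1, 2, 3, 4]) h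
  simp only [p4, V, map_add, map_sub, map_neg, map_mul, map_pow, map_ofNat, eval_X,
    Matrix.cons_val_zero, Matrix.cons_val_one, Matrix.head_cons, Matrix.cons_val_two,
    Matrix.tail_cons, Matrix.cons_val_three] at this
  norm_num at this

lemma key_sep (a b : MvPolynomial (Fin 4) ℂ) (h : ψ a + ψ b * p4 ^ 2 = 0) :
    a = 0 ∧ b = 0 := by
  -- choose square roots in KK
  obtain ⟨t0, ht0⟩ := IsAlgClosed.exists_pow_nat_eq (k := KK)
    ((ι (X 0)^2 - ι (X 1)^2 - ι (X 2)^2 - ι (X 3)^2)/2) (n := 2) (by norm_num)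
  obtain ⟨t1, ht1⟩ := IsAlgClosed.exists_pow_nat_eq (k := KK)
    ((-ι (X 0)^2 + ι (X 1)^2 - ι (X 2)^2 - ι (X 3)^2)/2) (n := 2) (by norm_num)
  obtain ⟨t2, ht2⟩ := IsAlgClosed.exists_pow_nat_eq (k := KK)
    ((-ι (X 0)^2 - ι (X 1)^2 + ι (X 2)^2 - ι (X 3)^2)/2) (n := 2) (by norm_num)
  obtain ⟨t3, ht3⟩ := IsAlgClosed.exists_pow_nat_eq (k := KK)
    ((-ι (X 0)^2 - ι (X 1)^2 - ι (X 2)^2 + ι (X 3)^2)/2) (n := 2) (by norm_num)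
  set θ : MvPolynomial (Fin 4) ℂ →+* KK :=
    eval₂Hom (ι.comp (C : ℂ →+* MvPolynomial (Fin 4) ℂ)) ![t0, t1, t2, t3] with hθ
  have hθX : ∀ i, θ (X i) = (![t0, t1, t2, t3] : Fin 4 → KK) i := fun i => eval₂Hom_X' _ _ _
  have hθ0 : θ (X 0) = t0 := hθX 0
  have hθ1 : θ (X 1) = t1 := hθX 1
  have hθ2 : θ (X 2) = t2 := hθX 2
  have hθ3 : θ (X 3) = t3 := hθX 3
  have hp0 : θ p0 = ι p0 := by
    simp only [p0, map_add, map_pow, hθ0, hθ1, hθ2, hθ3]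
    linear_combination (t0^2 + (ι (X 0)^2 - ι (X 1)^2 - ι (X 2)^2 - ι (X 3)^2)/2) * ht0 +
      (t1^2 + (-ι (X 0)^2 + ι (X 1)^2 - ι (X 2)^2 - ι (X 3)^2)/2) * ht1 +
      (t2^2 + (-ι (X 0)^2 - ι (X 1)^2 + ι (X 2)^2 - ι (X 3)^2)/2) * ht2 +
      (t3^2 + (-ι (X 0)^2 - ι (X 1)^2 - ι (X 2)^2 + ι (X 3)^2)/2) * ht3
  have hp1 : θ p1 = ι p1 := by
    simp only [p1, map_add, map_mul, map_pow, map_ofNat, hθ0, hθ1, hθ2, hθ3]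
    linear_combination (2*t1^2) * ht0 + (2*((ι (X 0)^2 - ι (X 1)^2 - ι (X 2)^2 - ι (X 3)^2)/2)) * ht1 +
      (2*t3^2) * ht2 + (2*((-ι (X 0)^2 - ι (X 1)^2 + ι (X 2)^2 - ι (X 3)^2)/2)) * ht3
  have hp2 : θ p2 = ι p2 := by
    simp only [p2, map_add, map_mul, map_pow, map_ofNat, hθ0, hθ1, hθ2, hθ3]
    linear_combination (2*t2^2) * ht0 + (2*t3^2) * ht1 +
      (2*((ι (X 0)^2 - ι (X 1)^2 - ι (X 2)^2 - ι (X 3)^2)/2)) * ht2 +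
      (2*((-ι (X 0)^2 + ι (X 1)^2 - ι (X 2)^2 - ι (X 3)^2)/2)) * ht3
  have hp3 : θ p3 = ι p3 := by
    simp only [p3, map_add, map_mul, map_pow, map_ofNat, hθ0, hθ1, hθ2, hθ3]
    linear_combination (2*t3^2) * ht0 + (2*t2^2) * ht1 +
      (2*((-ι (X 0)^2 + ι (X 1)^2 - ι (X 2)^2 - ι (X 3)^2)/2)) * ht2 +
      (2*((ι (X 0)^2 - ι (X 1)^2 - ι (X 2)^2 - ι (X 3)^2)/2)) * ht3
  have hp4 : θ p4 ^ 2 = ι V := by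
    simp only [p4, V, map_add, map_sub, map_neg, map_mul, map_pow, map_ofNat, hθ0, hθ1, hθ2, hθ3]
    linear_combination (16*t1^2*t2^2*t3^2) * ht0 +
      (16*((ι (X 0)^2 - ι (X 1)^2 - ι (X 2)^2 - ι (X 3)^2)/2)*t2^2*t3^2) * ht1 +
      (16*((ι (X 0)^2 - ι (X 1)^2 - ι (X 2)^2 - ι (X 3)^2)/2)*((-ι (X 0)^2 + ι (X 1)^2 - ι (X 2)^2 - ι (X 3)^2)/2)*t3^2) * ht2 +
      (16*((ι (X 0)^2 - ι (X 1)^2 - ι (X 2)^2 - ι (X 3)^2)/2)*((-ι (X 0)^2 + ι (X 1)^2 - ι (X 2)^2 - ι (X 3)^2)/2)*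
        ((-ι (X 0)^2 - ι (X 1)^2 + ι (X 2)^2 - ι (X 3)^2)/2)) * ht3
  have hcomm : ∀ s, θ (ψ s) = ι (ψ s) := by
    intro s
    have : θ.comp ψ.toRingHom = ι.comp ψ.toRingHom := by
      apply MvPolynomial.ringHom_ext
      · intro r
        simp only [RingHom.coe_comp, Function.comp_apply, AlgHom.toRingHom_eq_coe, RingHom.coe_coe, ψ, aeval_C]
        rw [hθ]
        simp [eval₂Hom_C]
      · intro i
        fin_cases i <;>
          simp only [RingHom.coe_comp, Function.comp_apply, AlgHom.toRingHom_eq_coe,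
            RingHom.coe_coe, ψ, aeval_X, Matrix.cons_val_zero, Matrix.cons_val_one,
            Matrix.head_cons, Matrix.cons_val_two, Matrix.tail_cons, Matrix.cons_val_three]
        · exact hp1
        · exact hp2
        · exact hp3
        · exact hp0
    exact congrFun (congrArg (fun f => f.toFun) this) s
  -- apply θ and ι to h
  have h1 : ι (ψ a) + ι (ψ b) * ι V = 0 := by
    have := congrArg θ h
    simp only [map_add, map_mul, map_pow, map_zero] at this
    rw [hcomm, hcomm] at this
    rw [← hp4]
    linear_combination this
  have h2 : ι (ψ a) + ι (ψ b) * ι (p4 ^ 2) = 0 := by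
    have := congrArg ι h
    simpa only [map_add, map_mul, map_zero] using this
  have h3 : ι (ψ b) * (ι (p4 ^ 2) - ι V) = 0 := by linear_combination h2 - h1
  have hb : ψ b = 0 := by
    rcases mul_eq_zero.mp h3 with hb' | hne
    · exact iota_inj (by simpa using hb')
    · exact absurd (iota_inj (sub_eq_zero.mp hne)) p4sq_ne_V
  have hb0 : b = 0 := psi_inj (by simpa using hb)
  have ha : ψ a = 0 := by rw [hb] at h; simpa using h
  exact ⟨psi_inj (by simpa using ha), hb0⟩

/-- sign flip of `x₀`. -/
noncomputable def σ : MvPolynomial (Fin 4) ℂ →ₐ[ℂ] MvPolynomial (Fin 4) ℂ :=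
  aeval ![-X 0, X 1, X 2, X 3]

lemma sigma_psi (s : MvPolynomial (Fin 4) ℂ) : σ (ψ s) = ψ s := by
  have : σ.comp ψ = ψ := by
    apply MvPolynomial.algHom_ext
    intro i
    fin_cases i <;> simp only [AlgHom.comp_apply, ψ, aeval_X]
    · show σ p1 = p1
      simp only [σ, p1, map_add, map_mul, map_pow, map_ofNat, aeval_X, Matrix.cons_val_zero,
        Matrix.cons_val_one, Matrix.head_cons, Matrix.cons_val_two, Matrix.tail_cons,
        Matrix.cons_val_three]
      ring
    · show σ p2 = p2
      simp only [σ, p2, map_add, map_mul, map_pow, map_ofNat, aeval_X, Matrix.cons_val_zero,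
        Matrix.cons_val_one, Matrix.head_cons, Matrix.cons_val_two, Matrix.tail_cons,
        Matrix.cons_val_three]
      ring
    · show σ p3 = p3
      simp only [σ, p3, map_add, map_mul, map_pow, map_ofNat, aeval_X, Matrix.cons_val_zero,
        Matrix.cons_val_one, Matrix.head_cons, Matrix.cons_val_two, Matrix.tail_cons,
        Matrix.cons_val_three]
      ring
    · show σ p0 = p0
      simp only [σ, p0, map_add, map_pow, aeval_X, Matrix.cons_val_zero,
        Matrix.cons_val_one, Matrix.head_cons, Matrix.cons_val_two, Matrix.tail_cons,
        Matrix.cons_val_three]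
      ring
  exact congrFun (congrArg (fun f => f.toFun) this) s

lemma sigma_p4 : σ p4 = -p4 := by
  simp only [σ, p4, map_mul, map_ofNat, aeval_X, Matrix.cons_val_zero, Matrix.cons_val_one,
    Matrix.head_cons, Matrix.cons_val_two, Matrix.tail_cons, Matrix.cons_val_three]
  ring

lemma p4_ne_zero : p4 ≠ 0 := by
  intro h
  have := congrArg (eval ![1, 1, 1, 1]) h
  simp [p4] at this

lemma split (s0 s1 s2 s3 : MvPolynomial (Fin 4) ℂ)
    (h : ψ s0 + ψ s1 * p4 + ψ s2 * p4 ^ 2 + ψ s3 * p4 ^ 3 = 0) :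
    s0 = 0 ∧ s1 = 0 ∧ s2 = 0 ∧ s3 = 0 := by
  have hσ := congrArg σ h
  simp only [map_add, map_mul, map_pow, map_zero, sigma_psi, sigma_p4] at hσ
  have heven : (2 : MvPolynomial (Fin 4) ℂ) * (ψ s0 + ψ s2 * p4 ^ 2) = 0 := by
    linear_combination h + hσ
  have hodd : p4 * ((2 : MvPolynomial (Fin 4) ℂ) * (ψ s1 + ψ s3 * p4 ^ 2)) = 0 := by
    linear_combination h - hσ
  have h2 : (2 : MvPolynomial (Fin 4) ℂ) ≠ 0 := two_ne_zero
  have he : ψ s0 + ψ s2 * p4 ^ 2 = 0 := by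
    rcases mul_eq_zero.mp heven with h' | h'
    · exact absurd h' h2
    · exact h'
  have ho : ψ s1 + ψ s3 * p4 ^ 2 = 0 := by
    rcases mul_eq_zero.mp hodd with h' | h'
    · exact absurd h' p4_ne_zero
    · rcases mul_eq_zero.mp h' with h'' | h''
      · exact absurd h'' h2
      · exact h''
  obtain ⟨h02, h22⟩ := key_sep _ _ he
  obtain ⟨h12, h32⟩ := key_sep _ _ ho
  exact ⟨h02, h12, h22, h32⟩

lemma phi_GI : φ GI = 0 := by
  simp only [φ, GI, map_add, map_sub, map_mul, map_pow, map_ofNat, aeval_X]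
  simp only [Matrix.cons_val_zero, Matrix.cons_val_one, Matrix.head_cons]
  norm_num [Fin.isValue, Matrix.cons_val_zero, Matrix.cons_val_one, Matrix.head_cons, Matrix.cons_val_two, Matrix.tail_cons, Matrix.cons_val_three, Matrix.cons_val_four, p0, p1, p2, p3, p4]
  ring

/-- the variable-swapping equivalence isolating `y₄`. -/
noncomputable def e : MvPolynomial (Fin 5) ℂ ≃ₐ[ℂ] Polynomial (MvPolynomial (Fin 4) ℂ) :=
  (renameEquiv ℂ (Equiv.swap (0 : Fin 5) 4)).trans (finSuccEquiv ℂ 4)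

lemma e_X0 : e (X 0) = Polynomial.C (X 3) := by
  have h1 : (Equiv.swap (0 : Fin 5) 4) 0 = 4 := Equiv.swap_apply_left _ _
  rw [e, AlgEquiv.trans_apply, renameEquiv_apply, rename_X, h1,
    show (4 : Fin 5) = Fin.succ 3 from rfl, finSuccEquiv_X_succ]

lemma e_X4 : e (X 4) = Polynomial.X := by
  have h1 : (Equiv.swap (0 : Fin 5) 4) 4 = 0 := Equiv.swap_apply_right _ _
  rw [e, AlgEquiv.trans_apply, renameEquiv_apply, rename_X, h1, finSuccEquiv_X_zero]

lemma e_X1 : e (X 1) = Polynomial.C (X 0) := by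
  have h1 : (Equiv.swap (0 : Fin 5) 4) 1 = 1 :=
    Equiv.swap_apply_of_ne_of_ne (by decide) (by decide)
  rw [e, AlgEquiv.trans_apply, renameEquiv_apply, rename_X, h1,
    show (1 : Fin 5) = Fin.succ 0 from rfl, finSuccEquiv_X_succ]

lemma e_X2 : e (X 2) = Polynomial.C (X 1) := by
  have h1 : (Equiv.swap (0 : Fin 5) 4) 2 = 2 :=
    Equiv.swap_apply_of_ne_of_ne (by decide) (by decide)
  rw [e, AlgEquiv.trans_apply, renameEquiv_apply, rename_X, h1,
    show (2 : Fin 5) = Fin.succ 1 from rfl, finSuccEquiv_X_succ]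

lemma e_X3 : e (X 3) = Polynomial.C (X 2) := by
  have h1 : (Equiv.swap (0 : Fin 5) 4) 3 = 3 :=
    Equiv.swap_apply_of_ne_of_ne (by decide) (by decide)
  rw [e, AlgEquiv.trans_apply, renameEquiv_apply, rename_X, h1,
    show (3 : Fin 5) = Fin.succ 2 from rfl, finSuccEquiv_X_succ]

noncomputable def gA : MvPolynomial (Fin 4) ℂ := X 3 ^ 2 - X 0 ^ 2 - X 1 ^ 2 - X 2 ^ 2
noncomputable def gB : MvPolynomial (Fin 4) ℂ :=
  X 0 ^ 2 * X 1 ^ 2 + X 0 ^ 2 * X 2 ^ 2 + X 1 ^ 2 * X 2 ^ 2 - 2 * (X 3 * X 0 * X 1 * X 2)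
noncomputable def g : Polynomial (MvPolynomial (Fin 4) ℂ) :=
  Polynomial.X ^ 4 + Polynomial.C gA * Polynomial.X ^ 2 + Polynomial.C gB

lemma lowdeg : (Polynomial.C gA * Polynomial.X ^ 2 + Polynomial.C gB).degree < 4 := by
  refine lt_of_le_of_lt (Polynomial.degree_add_le _ _) (max_lt ?_ ?_)
  · refine lt_of_le_of_lt (Polynomial.degree_mul_le _ _) ?_
    refine lt_of_le_of_lt (add_le_add Polynomial.degree_C_le
      (le_of_eq (Polynomial.degree_X_pow 2))) ?_
    norm_num
  · exact lt_of_le_of_lt Polynomial.degree_C_le (by norm_num)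

lemma e_GI : e GI = g := by
  simp only [GI, map_add, map_sub, map_mul, map_pow, map_ofNat, e_X0, e_X1, e_X2, e_X3, e_X4]
  simp only [g, gA, gB, map_add, map_sub, map_mul, map_pow, map_ofNat]
  ring

lemma g_monic : g.Monic := by
  have : g = Polynomial.X ^ (3 + 1) + (Polynomial.C gA * Polynomial.X ^ 2 + Polynomial.C gB) := by
    simp only [g]; ring
  rw [this]
  exact Polynomial.monic_X_pow_add (by exact_mod_cast lowdeg)

lemma g_deg : g.degree = 4 := by
  have : g = Polynomial.X ^ 4 + (Polynomial.C gA * Polynomial.X ^ 2 + Polynomial.C gB) := by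
    simp only [g]; ring
  rw [this, Polynomial.degree_add_eq_left_of_degree_lt (by
      rw [Polynomial.degree_X_pow]; exact_mod_cast lowdeg),
    Polynomial.degree_X_pow]
  rfl

noncomputable def F : Polynomial (MvPolynomial (Fin 4) ℂ) →+* MvPolynomial (Fin 4) ℂ :=
  (φ : MvPolynomial (Fin 5) ℂ →+* MvPolynomial (Fin 4) ℂ).comp
    (e.symm.toAlgHom.toRingHom)

lemma F_apply (p : Polynomial (MvPolynomial (Fin 4) ℂ)) : F p = φ (e.symm p) := rfl

lemma phi_esymm (p : Polynomial (MvPolynomial (Fin 4) ℂ)) :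
    φ (e.symm p) =
      Polynomial.eval₂ (ψ : MvPolynomial (Fin 4) ℂ →+* MvPolynomial (Fin 4) ℂ) p4 p := by
  rw [← F_apply]
  have hhom : F = Polynomial.eval₂RingHom
      (ψ : MvPolynomial (Fin 4) ℂ →+* MvPolynomial (Fin 4) ℂ) p4 := by
    apply Polynomial.ringHom_ext'
    · apply MvPolynomial.ringHom_ext
      · intro r
        simp only [RingHom.comp_apply]
        rw [F_apply]
        have h : e.symm (Polynomial.C (C r)) = C r := by
          rw [AlgEquiv.symm_apply_eq]
          rw [show (C r : MvPolynomial (Fin 5) ℂ) = algebraMap ℂ _ r from rfl, AlgEquiv.commutes]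
          rfl
        rw [h]
        simp [ψ, aeval_C, Polynomial.eval₂RingHom]
      · intro i
        fin_cases i
        · show (F.comp Polynomial.C) (X 0) = _
          simp only [RingHom.comp_apply]
          rw [F_apply, show e.symm (Polynomial.C (X 0)) = X 1 by rw [AlgEquiv.symm_apply_eq, e_X1]]
          show φ (X 1) = Polynomial.eval₂ _ p4 (Polynomial.C (X 0))
          rw [Polynomial.eval₂_C]
          simp [φ, ψ, aeval_X]
        · show (F.comp Polynomial.C) (X 1) = _
          simp only [RingHom.comp_apply]
          rw [F_apply, show e.symm (Polynomial.C (X 1)) = X 2 by rw [AlgEquiv.symm_apply_eq, e_X2]]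
          show φ (X 2) = Polynomial.eval₂ _ p4 (Polynomial.C (X 1))
          rw [Polynomial.eval₂_C]
          simp [φ, ψ, aeval_X]
        · show (F.comp Polynomial.C) (X 2) = _
          simp only [RingHom.comp_apply]
          rw [F_apply, show e.symm (Polynomial.C (X 2)) = X 3 by rw [AlgEquiv.symm_apply_eq, e_X3]]
          show φ (X 3) = Polynomial.eval₂ _ p4 (Polynomial.C (X 2))
          rw [Polynomial.eval₂_C]
          simp [φ, ψ, aeval_X]
        · show (F.comp Polynomial.C) (X 3) = _
          simp only [RingHom.comp_apply]
          rw [F_apply, show e.symm (Polynomial.C (X 3)) = X 0 by rw [AlgEquiv.symm_apply_eq, e_X0]]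
          show φ (X 0) = Polynomial.eval₂ _ p4 (Polynomial.C (X 3))
          rw [Polynomial.eval₂_C]
          simp [φ, ψ, aeval_X]
    · rw [F_apply, show e.symm Polynomial.X = X 4 by rw [AlgEquiv.symm_apply_eq, e_X4]]
      simp [φ, aeval_X]
  rw [hhom]
  rfl

/-- The kernel of the `ℂ`-algebra homomorphism `ℂ[y₀,…,y₄] → ℂ[x₀,…,x₃]`, `yᵢ ↦ pᵢ`, is
the principal ideal generated by the Igusa quartic `G_I`; in particular
`G_I(p₀,…,p₄) = 0`. -/
theorem kernel_is_igusa_quartic :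
    RingHom.ker (φ : MvPolynomial (Fin 5) ℂ →+* MvPolynomial (Fin 4) ℂ) =
      Ideal.span {GI} ∧ φ GI = 0 := by
  refine ⟨le_antisymm ?_ ?_, phi_GI⟩
  · intro f hf
    have hf' : φ f = 0 := hf
    set r := (e f) %ₘ g with hr
    set q := (e f) /ₘ g with hq
    have hdiv : e f = r + g * q := (Polynomial.modByMonic_add_div (e f) g).symm
    have hsymm_g : e.symm g = GI := by rw [← e_GI, AlgEquiv.symm_apply_apply]
    have hfe : f = e.symm r + GI * e.symm q := by
      have h' := congrArg e.symm hdiv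
      rw [AlgEquiv.symm_apply_apply, map_add, map_mul, hsymm_g] at h'
      exact h'
    have hr0 : φ (e.symm r) = 0 := by
      rw [hfe, map_add, map_mul, phi_GI, zero_mul, add_zero] at hf'
      exact hf'
    have hdegr : r.natDegree < 4 := by
      by_cases h0 : r = 0
      · simp [h0]
      · have hlt := Polynomial.degree_modByMonic_lt (e f) g_monic
        rw [g_deg] at hlt
        exact (Polynomial.natDegree_lt_iff_degree_lt h0).mpr (by exact_mod_cast hlt)
    have heval : Polynomial.eval₂
        (ψ : MvPolynomial (Fin 4) ℂ →+* MvPolynomial (Fin 4) ℂ) p4 r = 0 := by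
      rw [← phi_esymm]; exact hr0
    rw [Polynomial.eval₂_eq_sum_range' _ hdegr _] at heval
    simp only [Finset.sum_range_succ, Finset.sum_range_zero, zero_add, pow_zero, mul_one,
      pow_one, RingHom.coe_coe] at heval
    obtain ⟨h0, h1, h2, h3⟩ := split _ _ _ _ heval
    have hrz : r = 0 := by
      ext n
      rcases lt_or_ge n 4 with hn | hn
      · interval_cases n <;> simp [h0, h1, h2, h3]
      · simp [Polynomial.coeff_eq_zero_of_natDegree_lt (lt_of_lt_of_le hdegr hn)]
    rw [Ideal.mem_span_singleton]
    exact ⟨e.symm q, by rw [hfe, hrz, map_zero, zero_add]⟩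
  · rw [Ideal.span_le, Set.singleton_subset_iff]
    exact phi_GI
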